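/- arXiv:2403.15140 — 6 statements merged into one kernel-verified Lean document; each statement's English description precedes it below -/
import Mathlib

section
/- Let ω ≥ 0, k > 0 and D < 0 be real numbers and set κ = k/(1 − k·D). For all real x and ẽ satisfying the sector constraint ẽ·x ≥ (1/κ)·x², one has ((1/κ)·x − ẽ)·(ω·D·x + ω·ẽ) ≤ 0. -/
/-- Dissipation inequality for the integrator mode of a HIGS-based IRC. -/
theorem higs_irc_integrator_mode_dissipation (ω k D : ℝ)
    (hω : 0 ≤ ω) (hk : 0 < k) (hD : D < 0)
    (κ : ℝ) (hκ : κ = k / (1 - k * D)) :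
    ∀ x et : ℝ, et * x ≥ (1 / κ) * x ^ 2 →
      ((1 / κ) * x - et) * (ω * D * x + ω * et) ≤ 0 := by
  intro x et h
  have hkD : 0 < 1 - k * D := by nlinarith
  have hκ' : 1 / κ = 1 / k - D := by
    rw [hκ]; field_simp
  rw [hκ'] at h ⊢
  have hxu : x * ((1 / k - D) * x - et) ≤ 0 := by nlinarith
  have hk' : 0 < 1 / k := by positivity
  nlinarith [mul_nonneg hω (sq_nonneg ((1 / k - D) * x - et)),
    mul_nonneg (mul_nonneg hω hk'.le) (neg_nonneg.mpr hxu)]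
end

section
/- Let A and Y be real n×n matrices with A invertible and Y symmetric and invertible. If A·Y + Y·Aᵀ is negative semidefinite, then A⁻ᵀ·Y⁻¹ + Y⁻¹·A⁻¹ is negative semidefinite. -/
open Matrix

/-- A real symmetric matrix `M` is negative semidefinite if `xᵀMx ≤ 0` for all
vectors `x`. -/
def Matrix.NegSemidef {n : ℕ} (M : Matrix (Fin n) (Fin n) ℝ) : Prop :=
  M.IsSymm ∧ ∀ x : Fin n → ℝ, x ⬝ᵥ M.mulVec x ≤ 0

lemma negSemidef_congr {n : ℕ} {M : Matrix (Fin n) (Fin n) ℝ}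
    (hM : M.NegSemidef) (C : Matrix (Fin n) (Fin n) ℝ) :
    (C * M * Cᵀ).NegSemidef := by
  constructor
  · show (C * M * Cᵀ)ᵀ = _
    rw [transpose_mul, transpose_mul, transpose_transpose, hM.1, Matrix.mul_assoc]
  · intro x
    have : x ⬝ᵥ (C * M * Cᵀ).mulVec x = (Cᵀ.mulVec x) ⬝ᵥ M.mulVec (Cᵀ.mulVec x) := by
      rw [Matrix.mul_assoc, ← Matrix.mulVec_mulVec, ← Matrix.mulVec_mulVec,
        Matrix.dotProduct_mulVec, ← Matrix.mulVec_transpose]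
    rw [this]
    exact hM.2 _

/-- If `AY + YAᵀ ≤ 0` with `A` invertible and `Y` symmetric invertible, then
`A⁻ᵀY⁻¹ + Y⁻¹A⁻¹ ≤ 0`. -/
theorem inv_lyapunov_negSemidef (n : ℕ) (A Y : Matrix (Fin n) (Fin n) ℝ)
    (hA : IsUnit A.det) (hYsymm : Y.IsSymm) (hYinv : IsUnit Y.det)
    (h : (A * Y + Y * Aᵀ).NegSemidef) :
    ((A⁻¹)ᵀ * Y⁻¹ + Y⁻¹ * A⁻¹).NegSemidef := by
  have hYi : (Y⁻¹)ᵀ = Y⁻¹ := by rw [transpose_nonsing_inv, hYsymm.eq]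
  have hAT : IsUnit Aᵀ.det := by rwa [det_transpose]
  have key : (A⁻¹)ᵀ * Y⁻¹ + Y⁻¹ * A⁻¹ =
      (Y⁻¹ * A⁻¹) * (A * Y + Y * Aᵀ) * (Y⁻¹ * A⁻¹)ᵀ := by
    rw [transpose_mul, hYi, transpose_nonsing_inv,
      Matrix.mul_add, Matrix.add_mul]
    simp only [Matrix.mul_assoc]
    congr 1
    · rw [nonsing_inv_mul_cancel_left A _ hA, nonsing_inv_mul_cancel_left Y _ hYinv]
    · rw [mul_nonsing_inv_cancel_left Aᵀ _ hAT, mul_nonsing_inv Y hYinv, Matrix.mul_one]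
  rw [key]
  exact negSemidef_congr h _
end

section
/- Let k_p > 0, k_1 > 0, k_2 > 0, D < 0 and ω > 0 be real numbers, and define the complex rational function K̃(s) = (k_p·s² + k_1·s + k_2)/((1 − k_p·D)·s² − k_1·D·s − k_2·D). Then the denominator of K̃ is nonzero at s = iω and at s = −iω, and the complex number i·(K̃(iω) − K̃(−iω)) is real and equals 2·k_1·ω³ / (((1 − k_p·D)·ω² + k_2·D)² + (k_1·D·ω)²), which is strictly positive. -/
/-- Frequency-domain SNI condition for the PII²RC: for all `ω > 0`,
`j(K̃(jω) - K̃(-jω))` is real, equals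
`2k₁ω³/(((1 - k_p D)ω² + k₂D)² + (k₁Dω)²)`, and is strictly positive. -/
theorem pii2rc_sni_frequency_condition (kp k1 k2 D ω : ℝ)
    (hkp : 0 < kp) (hk1 : 0 < k1) (hk2 : 0 < k2) (hD : D < 0) (hω : 0 < ω)
    (num den K : ℂ → ℂ)
    (hnum : num = fun s => (kp : ℂ) * s ^ 2 + (k1 : ℂ) * s + (k2 : ℂ))
    (hden : den = fun s => ((1 - kp * D : ℝ) : ℂ) * s ^ 2 - ((k1 * D : ℝ) : ℂ) * s
      - ((k2 * D : ℝ) : ℂ))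
    (hK : K = fun s => num s / den s) :
    den (Complex.I * (ω : ℂ)) ≠ 0 ∧ den (-(Complex.I * (ω : ℂ))) ≠ 0 ∧
      Complex.I * (K (Complex.I * (ω : ℂ)) - K (-(Complex.I * (ω : ℂ))))
        = ((2 * k1 * ω ^ 3 /
            (((1 - kp * D) * ω ^ 2 + k2 * D) ^ 2 + (k1 * D * ω) ^ 2) : ℝ) : ℂ) ∧
      0 < 2 * k1 * ω ^ 3 / (((1 - kp * D) * ω ^ 2 + k2 * D) ^ 2 + (k1 * D * ω) ^ 2) := by
  have hIm : k1 * D * ω ≠ 0 :=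
    ne_of_lt (mul_neg_of_neg_of_pos (mul_neg_of_pos_of_neg hk1 hD) hω)
  have h1 : den (Complex.I * (ω : ℂ)) ≠ 0 := by
    rw [hden]
    intro h
    have := congrArg Complex.im h
    simp [mul_pow, Complex.I_sq, ← Complex.ofReal_pow, Complex.add_im, Complex.mul_im,
      Complex.sub_im] at this
    rcases this with (h | h) | h
    · exact hk1.ne' h
    · exact hD.ne h
    · exact hω.ne' h
  have h2 : den (-(Complex.I * (ω : ℂ))) ≠ 0 := by
    rw [hden]
    intro h
    have := congrArg Complex.im h
    simp [mul_pow, Complex.I_sq, ← Complex.ofReal_pow, Complex.add_im, Complex.mul_im,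
      Complex.sub_im] at this
    rcases this with (h | h) | h
    · exact hk1.ne' h
    · exact hD.ne h
    · exact hω.ne' h
  have hΔ : 0 < ((1 - kp * D) * ω ^ 2 + k2 * D) ^ 2 + (k1 * D * ω) ^ 2 := by
    nlinarith [sq_nonneg ((1 - kp * D) * ω ^ 2 + k2 * D), sq_pos_of_ne_zero hIm]
  refine ⟨h1, h2, ?_, by positivity⟩
  rw [hK]
  simp only [hnum]
  rw [hden] at h1 h2 ⊢
  simp only at h1 h2 ⊢
  rw [div_sub_div _ _ h1 h2, mul_div_assoc', Complex.ofReal_div]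
  rw [div_eq_div_iff (mul_ne_zero h1 h2) (by exact_mod_cast hΔ.ne')]
  push_cast
  ring_nf
  simp [Complex.I_sq]
  ring
end

section
/- Let ω ≥ 0 and k > 0 be real numbers. Let x, e : ℝ → ℝ, let t ∈ ℝ, suppose x has derivative x' at t, and suppose that at time t either (integrator mode) x' = ω·e(t) and e(t)·x(t) ≥ (1/k)·x(t)², or (gain mode) x(t) = k·e(t). Then the storage function s ↦ (1/(2k))·x(s)² has derivative (1/k)·x(t)·x' at t and this derivative satisfies (1/k)·x(t)·x' ≤ e(t)·x'. -/
/-- A HIGS is a nonlinear NI system with storage function `V(x) = x²/(2k)`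
satisfying `V̇ ≤ e·ẋ` in both the integrator and the gain mode. -/
theorem higs_is_NI (ω k : ℝ) (hω : 0 ≤ ω) (hk : 0 < k)
    (x e : ℝ → ℝ) (t : ℝ) (x' : ℝ) (hx : HasDerivAt x x' t)
    (hmode : (x' = ω * e t ∧ e t * x t ≥ (1 / k) * (x t) ^ 2) ∨ x t = k * e t) :
    HasDerivAt (fun s => (1 / (2 * k)) * (x s) ^ 2) ((1 / k) * x t * x') t ∧
      (1 / k) * x t * x' ≤ e t * x' := by
  constructor
  · have h : HasDerivAt (fun s => (1 / (2 * k)) * (x s) ^ 2)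
        ((1 / (2 * k)) * ((2 : ℕ) * x t ^ (2 - 1) * x')) t :=
      ((hx.fun_pow 2).const_mul (1 / (2 * k)))
    convert h using 1
    field_simp
    ring
  · rcases hmode with ⟨hx', hsec⟩ | hg
    · subst hx'
      have h1 : e t * x t - (1 / k) * (x t) ^ 2 ≥ 0 := by linarith
      have h2 : (e t - x t / k) ^ 2 ≥ 0 := sq_nonneg _
      have hk' : (0:ℝ) < 1 / k := by positivity
      have h3 : (e t) ^ 2 - 1 / k * (e t * x t) ≥ 0 := by
        have h4 := mul_le_mul_of_nonneg_left h1 (le_of_lt hk')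
        ring_nf at h2 h4 ⊢
        linarith
      have h5 := mul_nonneg hω h3
      ring_nf at h5 ⊢
      linarith
    · rw [hg]; field_simp; exact le_rfl
end

section
/- Let Y be a real symmetric positive definite n×n matrix, let C be a real 1×n matrix, let k_p > 0, k_{h1} > 0 and D < 0 be real numbers, and set γ = 1/(1 − D·k_p). Then the symmetric (n+2)×(n+2) block matrix M̃ with blocks [[Y⁻¹ − k_p·γ·Cᵀ·C, −γ·Cᵀ, −γ·Cᵀ], [−γ·C, 1/k_{h1} − D·γ, −D·γ], [−γ·C, −D·γ, −D·γ]] (block sizes n, 1, 1) is positive definite if and only if D < −C·Y·Cᵀ. -/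
open Matrix

section Aux
variable {m n : Type*} [Fintype m] [DecidableEq m] [Fintype n] [DecidableEq n]

lemma posDef_fromBlocks₁₁' {A : Matrix m m ℝ} (B : Matrix m n ℝ) (D : Matrix n n ℝ)
    (hA : A.PosDef) [Invertible A] :
    (fromBlocks A B Bᴴ D).PosDef ↔ (D - Bᴴ * A⁻¹ * B).PosDef := by
  rw [posDef_iff_dotProduct_mulVec, posDef_iff_dotProduct_mulVec]
  constructor
  · intro h
    refine ⟨(Matrix.IsHermitian.fromBlocks₁₁ B D hA.1).mp h.1, fun y hy => ?_⟩
    have h2 := h.2 (x := (-((A⁻¹ * B) *ᵥ y)) ⊕ᵥ y) ?_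
    · rw [dotProduct_mulVec, Matrix.schur_complement_eq₁₁ B D _ _ hA.1,
        neg_add_cancel] at h2
      simpa [dotProduct_mulVec] using h2
    · intro hz
      exact hy (funext fun i => congrFun hz (Sum.inr i))
  · intro h
    refine ⟨(Matrix.IsHermitian.fromBlocks₁₁ B D hA.1).mpr h.1, fun z hz => ?_⟩
    rw [dotProduct_mulVec, ← Sum.elim_comp_inl_inr z,
      Matrix.schur_complement_eq₁₁ B D _ _ hA.1]
    by_cases hy : z ∘ Sum.inr = 0
    · have hx : z ∘ Sum.inl + (A⁻¹ * B) *ᵥ (z ∘ Sum.inr) ≠ 0 := by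
        rw [hy]; simp only [mulVec_zero, add_zero]
        intro hx; apply hz
        rw [← Sum.elim_comp_inl_inr z, hx, hy]; ext (i|i) <;> simp
      have := hA.dotProduct_mulVec_pos hx
      rw [dotProduct_mulVec] at this
      have h2 : star (z ∘ Sum.inr) ᵥ* (D - Bᴴ * A⁻¹ * B) ⬝ᵥ (z ∘ Sum.inr) = 0 := by
        rw [hy]; simp
      linarith
    · have h1 := h.2 hy
      rw [dotProduct_mulVec] at h1
      have h2 := (posSemidef_iff_dotProduct_mulVec.mp hA.posSemidef).2 (z ∘ Sum.inl + (A⁻¹ * B) *ᵥ (z ∘ Sum.inr))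
      rw [dotProduct_mulVec] at h2
      linarith

end Aux

section Aux2
variable {m n : Type*} [Fintype m] [DecidableEq m] [Fintype n] [DecidableEq n]

lemma posDef_fromBlocks₂₂' (A : Matrix m m ℝ) (B : Matrix m n ℝ) {D : Matrix n n ℝ}
    (hD : D.PosDef) [Invertible D] :
    (fromBlocks A B Bᴴ D).PosDef ↔ (A - B * D⁻¹ * Bᴴ).PosDef := by
  rw [posDef_iff_dotProduct_mulVec, posDef_iff_dotProduct_mulVec]
  constructor
  · intro h
    refine ⟨(Matrix.IsHermitian.fromBlocks₂₂ A B hD.1).mp h.1, fun x hx => ?_⟩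
    have h2 := h.2 (x := x ⊕ᵥ (-((D⁻¹ * Bᴴ) *ᵥ x))) ?_
    · rw [dotProduct_mulVec, Matrix.schur_complement_eq₂₂ A B _ _ hD.1] at h2
      rw [add_neg_cancel] at h2
      simpa [dotProduct_mulVec] using h2
    · intro hz
      exact hx (funext fun i => congrFun hz (Sum.inl i))
  · intro h
    refine ⟨(Matrix.IsHermitian.fromBlocks₂₂ A B hD.1).mpr h.1, fun z hz => ?_⟩
    rw [dotProduct_mulVec, ← Sum.elim_comp_inl_inr z,
      Matrix.schur_complement_eq₂₂ A B _ _ hD.1]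
    by_cases hx : z ∘ Sum.inl = 0
    · have hy : (D⁻¹ * Bᴴ) *ᵥ (z ∘ Sum.inl) + z ∘ Sum.inr ≠ 0 := by
        rw [hx]; simp only [mulVec_zero, zero_add]
        intro hy; apply hz
        rw [← Sum.elim_comp_inl_inr z, hx, hy]; ext (i|i) <;> simp
      have := hD.dotProduct_mulVec_pos hy
      rw [dotProduct_mulVec] at this
      have h2 : star (z ∘ Sum.inl) ᵥ* (A - B * D⁻¹ * Bᴴ) ⬝ᵥ (z ∘ Sum.inl) = 0 := by
        rw [hx]; simp
      linarith
    · have h1 := h.2 hx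
      rw [dotProduct_mulVec] at h1
      have h2 := (posSemidef_iff_dotProduct_mulVec.mp hD.posSemidef).2 ((D⁻¹ * Bᴴ) *ᵥ (z ∘ Sum.inl) + z ∘ Sum.inr)
      rw [dotProduct_mulVec] at h2
      linarith

end Aux2

lemma posDef_fin_one_iff (M : Matrix (Fin 1) (Fin 1) ℝ) : M.PosDef ↔ 0 < M 0 0 := by
  rw [posDef_iff_dotProduct_mulVec]
  constructor
  · intro h
    have := h.2 (x := ![1]) (by intro h1; simpa using congrFun h1 0)
    simpa [dotProduct, mulVec] using this
  · intro h
    refine ⟨?_, fun x hx => ?_⟩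
    · ext i j; fin_cases i; fin_cases j; simp [conjTranspose_apply]
    · have hx0 : x 0 ≠ 0 := by
        intro h0; apply hx; ext i; fin_cases i; exact h0
      have : star x ⬝ᵥ M *ᵥ x = M 0 0 * (x 0 * x 0) := by
        simp [dotProduct, mulVec, Fin.sum_univ_one]; ring
      rw [this]
      exact mul_pos h (mul_self_pos.mpr hx0)

/-- The Lyapunov matrix `M̃` of the interconnection of a linear NI system and a
HIGS-based PII² resonant controller is positive definite iff `D < -CYCᵀ`. -/
theorem pii2rc_lyapunov_matrix_posDef_iff (n : ℕ) (Y : Matrix (Fin n) (Fin n) ℝ)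
    (hY : Y.PosDef) (C : Matrix (Fin 1) (Fin n) ℝ) (kp kh1 D : ℝ)
    (hkp : 0 < kp) (hkh1 : 0 < kh1) (hD : D < 0)
    (γ : ℝ) (hγ : γ = 1 / (1 - D * kp)) :
    (Matrix.fromBlocks (Y⁻¹ - (kp * γ) • (Cᵀ * C))
        (Matrix.of fun i (_ : Fin 2) => -γ * C 0 i)
        (Matrix.of fun (_ : Fin 2) j => -γ * C 0 j)
        !![1 / kh1 - D * γ, -D * γ; -D * γ, -D * γ]).PosDef
      ↔ D < -(C * Y * Cᵀ) 0 0 := by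
  have hden : 0 < 1 - D * kp := by nlinarith
  have hγ0 : 0 < γ := by rw [hγ]; positivity
  have hγ1 : γ * (1 - D * kp) = 1 := by rw [hγ]; field_simp
  have hb : 0 < -(D * γ) := by nlinarith
  have hDne : D ≠ 0 := ne_of_lt hD
  set E : Matrix (Fin 2) (Fin 2) ℝ :=
    !![1 / kh1 - D * γ, -D * γ; -D * γ, -D * γ] with hEdef
  set A : Matrix (Fin n) (Fin n) ℝ := Y⁻¹ - (kp * γ) • (Cᵀ * C) with hAdef
  set B : Matrix (Fin n) (Fin 2) ℝ := Matrix.of fun i (_ : Fin 2) => -γ * C 0 i with hBdef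
  have hBH : (Matrix.of fun (_ : Fin 2) j => -γ * C 0 j) = Bᴴ := by
    ext i j; simp [hBdef, conjTranspose_apply]
  rw [hBH]
  have hE : E.PosDef := by
    rw [posDef_iff_dotProduct_mulVec]
    constructor
    · ext i j; fin_cases i <;> fin_cases j <;> simp [hEdef, conjTranspose_apply]
    · intro x hx
      have hx01 : x 0 ≠ 0 ∨ x 1 ≠ 0 := by
        by_contra hc; push_neg at hc
        exact hx (funext fun i => by fin_cases i <;> simp [hc.1, hc.2])
      have hq : star x ⬝ᵥ E *ᵥ x
          = (1/kh1) * (x 0 * x 0) + (-(D*γ)) * ((x 0 + x 1) * (x 0 + x 1)) := by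
        simp [hEdef, dotProduct, mulVec, Fin.sum_univ_two]; ring
      rw [hq]
      have h1 : 0 < 1/kh1 := by positivity
      rcases hx01 with h|h
      · nlinarith [mul_self_pos.mpr h, mul_self_nonneg (x 0 + x 1)]
      · rcases eq_or_ne (x 0 + x 1) 0 with he|he
        · have hx0 : x 0 ≠ 0 := fun h0 => h (by rw [h0, zero_add] at he; exact he)
          nlinarith [mul_pos h1 (mul_self_pos.mpr hx0),
            mul_nonneg hb.le (mul_self_nonneg (x 0 + x 1))]
        · nlinarith [mul_pos hb (mul_self_pos.mpr he),
            mul_nonneg h1.le (mul_self_nonneg (x 0))]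
  haveI : Invertible E := E.invertibleOfIsUnitDet (isUnit_iff_ne_zero.mpr hE.det_pos.ne')
  rw [posDef_fromBlocks₂₂' A B hE]
  have hEinv : E⁻¹ = !![kh1, -kh1; -kh1, kh1 - 1/(D*γ)] := by
    apply inv_eq_right_inv
    ext i j
    fin_cases i <;> fin_cases j <;>
      simp [hEdef, mul_apply, Fin.sum_univ_two] <;> field_simp <;> ring
  have hSchur : A - B * E⁻¹ * Bᴴ = Y⁻¹ + D⁻¹ • (Cᵀ * C) := by
    ext i j
    simp [hAdef, hBdef, hEinv, mul_apply, Fin.sum_univ_two, conjTranspose_apply,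
      Matrix.sub_apply, Matrix.add_apply, Matrix.smul_apply, transpose_apply, Fin.sum_univ_one]
    field_simp
    linear_combination (C 0 i * C 0 j) * hγ1
  rw [hSchur]
  have hYdet : IsUnit Y.det := isUnit_iff_ne_zero.mpr hY.det_pos.ne'
  have hYinv : Y⁻¹.PosDef := hY.inv
  haveI : Invertible Y := Y.invertibleOfIsUnitDet hYdet
  haveI : Invertible Y⁻¹ := Y⁻¹.invertibleOfIsUnitDet (isUnit_iff_ne_zero.mpr hYinv.det_pos.ne')
  have hmD : (!![-D] : Matrix (Fin 1) (Fin 1) ℝ).PosDef :=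
    (posDef_fin_one_iff _).mpr (by simp; linarith)
  haveI : Invertible (!![-D] : Matrix (Fin 1) (Fin 1) ℝ) :=
    Matrix.invertibleOfIsUnitDet _ (isUnit_iff_ne_zero.mpr hmD.det_pos.ne')
  have hmDinv : (!![-D] : Matrix (Fin 1) (Fin 1) ℝ)⁻¹ = !![-D⁻¹] := by
    apply inv_eq_right_inv
    ext i j; fin_cases i; fin_cases j
    simp [mul_apply]
    field_simp
  have hstep : Y⁻¹ - Cᴴ * !![-D⁻¹] * C = Y⁻¹ + D⁻¹ • (Cᵀ * C) := by
    ext i j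
    simp [mul_apply, Fin.sum_univ_one, conjTranspose_apply, Matrix.sub_apply, Matrix.add_apply,
      Matrix.smul_apply, transpose_apply]
    ring
  have k1 := posDef_fromBlocks₁₁' C Y⁻¹ hmD
  have k2 := posDef_fromBlocks₂₂' (!![-D]) C hYinv
  rw [Y.nonsing_inv_nonsing_inv hYdet] at k2
  rw [hmDinv, hstep] at k1
  rw [k1.symm.trans k2, posDef_fin_one_iff]
  have hCH : Cᴴ = Cᵀ := conjTranspose_eq_transpose_of_trivial C
  rw [hCH]
  simp [Matrix.sub_apply]
  constructor <;> intro h <;> linarith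
end

section
/- Let A, Y be real n×n matrices with A invertible and Y symmetric positive definite such that A·Y + Y·Aᵀ is negative semidefinite, let C be a real 1×n matrix, and set B = −A·Y·Cᵀ. Let ω_h ≥ 0, k_h > 0, D < 0 and κ̃ = k_h/(1 − k_h·D). Let x : ℝ → ℝⁿ and x_h : ℝ → ℝ, let t ∈ ℝ, suppose x has derivative vector v at t with v = A·x(t) + B·x_h(t), suppose x_h has derivative x' at t, set ẽ = C·x(t) (a scalar), and suppose at time t either (integrator mode) x' = ω_h·D·x_h(t) + ω_h·ẽ and ẽ·x_h(t) ≥ (1/κ̃)·x_h(t)², or (gain mode) x_h(t) = κ̃·ẽ. Then the function s ↦ ½·x(s)ᵀ·Y⁻¹·x(s) − x_h(s)·(C·x(s)) + (1/(2κ̃))·x_h(s)² has derivative at t equal to vᵀ·A⁻ᵀ·Y⁻¹·v + x'·((1/κ̃)·x_h(t) − ẽ), and this derivative is ≤ 0. -/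
open Matrix

/-- Lyapunov decrease `Ẇ ≤ 0` for the closed-loop interconnection of a linear
NI system (satisfying the NI lemma with certificate `Y`) and a HIGS-based IRC,
along the Lyapunov function `W(x, x_h) = ½xᵀY⁻¹x - x_h·Cx + x_h²/(2κ̃)`. -/
theorem closed_loop_lyapunov_decrease (n : ℕ) (A Y : Matrix (Fin n) (Fin n) ℝ)
    (hA : IsUnit A.det) (hY : Y.PosDef)
    (hLyap : (A * Y + Y * Aᵀ).NegSemidef)
    (C : Matrix (Fin 1) (Fin n) ℝ) (B : Matrix (Fin n) (Fin 1) ℝ)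
    (hB : B = -(A * Y * Cᵀ))
    (ωh kh D : ℝ) (hω : 0 ≤ ωh) (hk : 0 < kh) (hD : D < 0)
    (κ : ℝ) (hκ : κ = kh / (1 - kh * D))
    (x : ℝ → Fin n → ℝ) (xh : ℝ → ℝ) (t : ℝ)
    (v : Fin n → ℝ) (hx : HasDerivAt x v t)
    (hv : v = A.mulVec (x t) + xh t • (fun i => B i 0))
    (x' : ℝ) (hxh : HasDerivAt xh x' t)
    (etil : ℝ) (hetil : etil = C.mulVec (x t) 0)
    (hmode : (x' = ωh * D * xh t + ωh * etil ∧ etil * xh t ≥ (1 / κ) * (xh t) ^ 2)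
      ∨ xh t = κ * etil) :
    HasDerivAt
      (fun s => (1 / 2) * (x s ⬝ᵥ Y⁻¹.mulVec (x s)) - xh s * (C.mulVec (x s) 0)
        + (1 / (2 * κ)) * (xh s) ^ 2)
      (v ⬝ᵥ ((A⁻¹)ᵀ * Y⁻¹).mulVec v + x' * ((1 / κ) * xh t - etil)) t ∧
    v ⬝ᵥ ((A⁻¹)ᵀ * Y⁻¹).mulVec v + x' * ((1 / κ) * xh t - etil) ≤ 0 := by
  -- basic positivity facts
  have hden : 0 < 1 - kh * D := by nlinarith
  have hκpos : 0 < κ := by rw [hκ]; positivity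
  have hκne : κ ≠ 0 := ne_of_gt hκpos
  have hκinv : 1 / κ = 1 / kh - D := by
    rw [hκ]; field_simp
  -- symmetry and invertibility facts
  have hYs : Yᵀ = Y := hY.1.eq
  have hYinvs : (Y⁻¹)ᵀ = Y⁻¹ := by rw [transpose_nonsing_inv, hYs]
  have hYd : IsUnit Y.det := isUnit_iff_ne_zero.mpr hY.det_pos.ne'
  have hAinvA : A⁻¹ * A = 1 := nonsing_inv_mul A hA
  have hAAinv : A * A⁻¹ = 1 := mul_nonsing_inv A hA
  have hYYinv : Y * Y⁻¹ = 1 := mul_nonsing_inv Y hYd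
  -- the column of Cᵀ
  set c : Fin n → ℝ := fun j => C 0 j with hc
  -- A⁻¹ v
  have colmul : ∀ M : Matrix (Fin n) (Fin n) ℝ, (fun i => (M * Cᵀ) i 0) = M.mulVec c := by
    intro M
    funext i
    simp [Matrix.mul_apply, mulVec, dotProduct, hc]
  have hAv : A⁻¹.mulVec v = x t - xh t • Y.mulVec c := by
    have hbcol : (fun i => B i 0) = -(A.mulVec (Y.mulVec c)) := by
      have : (fun i => B i 0) = -(fun i => ((A * Y) * Cᵀ) i 0) := by
        rw [hB]; funext i; simp [Matrix.mul_assoc]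
      rw [this, colmul (A * Y), ← mulVec_mulVec]
    rw [hv, hbcol, mulVec_add, mulVec_mulVec, hAinvA, one_mulVec, mulVec_smul,
      Matrix.mulVec_neg, mulVec_mulVec, mulVec_mulVec, hAinvA,
      Matrix.one_mul, smul_neg, sub_eq_add_neg]
  -- the quadratic-form term equals (A⁻¹ v) ⬝ Y⁻¹ v
  have hQ : v ⬝ᵥ ((A⁻¹)ᵀ * Y⁻¹).mulVec v = (A⁻¹.mulVec v) ⬝ᵥ Y⁻¹.mulVec v := by
    rw [← mulVec_mulVec, dotProduct_mulVec, vecMul_transpose]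
  -- (Y c) ⬝ (Y⁻¹ v) = c ⬝ v
  have hYc : (Y.mulVec c) ⬝ᵥ Y⁻¹.mulVec v = c ⬝ᵥ v := by
    rw [dotProduct_mulVec, ← Matrix.mulVec_transpose, hYinvs, mulVec_mulVec,
      show Y⁻¹ * Y = 1 from nonsing_inv_mul Y hYd, one_mulVec]
  have hcv : c ⬝ᵥ v = C.mulVec v 0 := by simp [mulVec, dotProduct, hc]
  -- value of the quadratic term
  have hQval : v ⬝ᵥ ((A⁻¹)ᵀ * Y⁻¹).mulVec v
      = x t ⬝ᵥ Y⁻¹.mulVec v - xh t * C.mulVec v 0 := by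
    rw [hQ, hAv, sub_dotProduct, smul_dotProduct, hYc, hcv, smul_eq_mul]
  -- componentwise derivatives
  have hxi : ∀ i, HasDerivAt (fun s => x s i) (v i) t := fun i => hasDerivAt_pi.mp hx i
  -- derivative of the quadratic form
  have h1 : HasDerivAt (fun s => x s ⬝ᵥ Y⁻¹.mulVec (x s))
      (v ⬝ᵥ Y⁻¹.mulVec (x t) + x t ⬝ᵥ Y⁻¹.mulVec v) t := by
    simp only [dotProduct, mulVec]
    have h := HasDerivAt.fun_sum (u := Finset.univ) (fun i _ =>
      (hxi i).mul (HasDerivAt.fun_sum (u := Finset.univ)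
        (fun j _ => (hxi j).const_mul (Y⁻¹ i j))))
    refine h.congr_deriv ?_
    rw [← Finset.sum_add_distrib]
  -- derivative of s ↦ C x(s)
  have hC : HasDerivAt (fun s => C.mulVec (x s) 0) (C.mulVec v 0) t := by
    simp only [mulVec, dotProduct]
    exact HasDerivAt.fun_sum (fun j _ => (hxi j).const_mul (C 0 j))
  -- derivative of W
  have hW : HasDerivAt
      (fun s => (1 / 2) * (x s ⬝ᵥ Y⁻¹.mulVec (x s)) - xh s * (C.mulVec (x s) 0)
        + (1 / (2 * κ)) * (xh s) ^ 2)
      ((1 / 2) * (v ⬝ᵥ Y⁻¹.mulVec (x t) + x t ⬝ᵥ Y⁻¹.mulVec v)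
        - (x' * C.mulVec (x t) 0 + xh t * C.mulVec v 0)
        + (1 / (2 * κ)) * ((2 : ℕ) * xh t ^ 1 * x')) t := by
    exact ((h1.const_mul (1 / 2 : ℝ)).sub (hxh.mul hC)).add
      ((hxh.pow 2).const_mul (1 / (2 * κ)))
  -- symmetry of the bilinear form
  have hsymm : v ⬝ᵥ Y⁻¹.mulVec (x t) = x t ⬝ᵥ Y⁻¹.mulVec v := by
    rw [dotProduct_mulVec, ← Matrix.mulVec_transpose, hYinvs, dotProduct_comm]
  -- the computed derivative equals the claimed one
  have hDeq : (1 / 2) * (v ⬝ᵥ Y⁻¹.mulVec (x t) + x t ⬝ᵥ Y⁻¹.mulVec v)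
        - (x' * C.mulVec (x t) 0 + xh t * C.mulVec v 0)
        + (1 / (2 * κ)) * ((2 : ℕ) * xh t ^ 1 * x')
      = v ⬝ᵥ ((A⁻¹)ᵀ * Y⁻¹).mulVec v + x' * ((1 / κ) * xh t - etil) := by
    rw [hQval, hsymm, ← hetil]
    field_simp
    ring
  refine ⟨?_, ?_⟩
  · rw [← hDeq]; exact hW
  · -- the quadratic term is ≤ 0
    have hquad : v ⬝ᵥ ((A⁻¹)ᵀ * Y⁻¹).mulVec v ≤ 0 := by
      set z : Fin n → ℝ := (Y⁻¹ * A⁻¹).mulVec v with hz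
      have hneg := hLyap.2 z
      have hzv : z ⬝ᵥ (A * Y).mulVec z = z ⬝ᵥ v := by
        rw [hz, mulVec_mulVec, show A * Y * (Y⁻¹ * A⁻¹) = 1 by
          rw [Matrix.mul_assoc, ← Matrix.mul_assoc Y, hYYinv, Matrix.one_mul, hAAinv],
          one_mulVec]
      have hsplit : z ⬝ᵥ (A * Y + Y * Aᵀ).mulVec z = 2 * (z ⬝ᵥ v) := by
        rw [add_mulVec, dotProduct_add, hzv]
        have : z ⬝ᵥ (Y * Aᵀ).mulVec z = z ⬝ᵥ (A * Y).mulVec z := by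
          rw [dotProduct_mulVec, show Y * Aᵀ = ((A * Yᵀ))ᵀ by
            rw [transpose_mul, transpose_transpose], vecMul_transpose, hYs,
            dotProduct_comm]
        rw [this, hzv]; ring
      have hzvQ : z ⬝ᵥ v = v ⬝ᵥ ((A⁻¹)ᵀ * Y⁻¹).mulVec v := by
        rw [hQ, hz, ← mulVec_mulVec,
          dotProduct_comm (Y⁻¹.mulVec (A⁻¹.mulVec v)) v, dotProduct_mulVec,
          ← Matrix.mulVec_transpose, hYinvs,
          dotProduct_comm (Y⁻¹.mulVec v) (A⁻¹.mulVec v)]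
      rw [hsplit, hzvQ] at hneg
      linarith
    -- the HIGS term is ≤ 0
    have hhigs : x' * ((1 / κ) * xh t - etil) ≤ 0 := by
      rcases hmode with ⟨hx', hsec⟩ | hgain
      · have hkey : x' * ((1 / κ) * xh t - etil)
            = -(ωh * ((etil - (1 / κ) * xh t) ^ 2
              + (1 / kh) * (etil * xh t - (1 / κ) * xh t ^ 2))) := by
          have hDval : D = 1 / kh - 1 / κ := by rw [hκinv]; ring
          rw [hx', hDval]; ring
        rw [hkey]
        have h2 : (0 : ℝ) ≤ (etil - (1 / κ) * xh t) ^ 2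
            + (1 / kh) * (etil * xh t - (1 / κ) * xh t ^ 2) := by
          have := sq_nonneg (etil - (1 / κ) * xh t)
          have hkh : 0 < 1 / kh := by positivity
          nlinarith
        nlinarith [mul_nonneg hω h2]
      · have : (1 / κ) * xh t - etil = 0 := by
          rw [hgain]; field_simp; ring
        rw [this, mul_zero]
    exact add_nonpos hquad hhigs
end
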